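/- In a finite directed acyclic graph G, suppose vertex X₂ has exactly one incident edge, namely X₁ → X₂. Let Y be a vertex and U a set of vertices with Y ∉ U, X₁ ∉ U, X₂ ∉ U, Y ∉ {X₁, X₂}. If X₂ and Y are d-separated by U in G, then X₁ and Y are d-separated by U in G. -/

import Mathlib

/-- Two vertices are adjacent if there is an edge in either direction. -/
def IsAdj {V : Type*} (E : V → V → Prop) (u v : V) : Prop := E u v ∨ E v u

/-- `w` is an interior (non-endpoint) vertex of the vertex list `l`. -/
def Interior {V : Type*} (l : List V) (w : V) : Prop :=
  ∃ u v, List.IsInfix [u, w, v] l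

/-- `w` is a collider on the vertex list `l`: both neighboring edges point into `w`. -/
def ColliderOn {V : Type*} (E : V → V → Prop) (l : List V) (w : V) : Prop :=
  ∃ u v, List.IsInfix [u, w, v] l ∧ E u w ∧ E v w

/-- `d` is a descendant of `w` (via a directed path, possibly trivial). -/
def Descendant {V : Type*} (E : V → V → Prop) (w d : V) : Prop :=
  Relation.ReflTransGen E w d

/-- A path (as a list of vertices) is blocked by the set `U`. -/
def Blocked {V : Type*} (E : V → V → Prop) (U : Set V) (l : List V) : Prop :=
  (∃ w, Interior l w ∧ ¬ ColliderOn E l w ∧ w ∈ U) ∨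
  (∃ w, Interior l w ∧ ColliderOn E l w ∧ w ∉ U ∧
    ∀ d, Descendant E w d → d ∉ U)

/-- `a` and `b` are d-separated by `U`: every path between them is blocked. -/
def DSep {V : Type*} (E : V → V → Prop) (U : Set V) (a b : V) : Prop :=
  ∀ l : List V, l.Nodup → l.Chain' (IsAdj E) →
    l.head? = some a → l.getLast? = some b → Blocked E U l



/-- Every member of a list is its head, its last element, or interior. -/
lemma mem_head_last_or_interior {V : Type*} {l : List V} {w : V} (h : w ∈ l) :
    l.head? = some w ∨ l.getLast? = some w ∨ Interior l w := by
  obtain ⟨s, t, rfl⟩ := List.append_of_mem h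
  cases s with
  | nil => left; rfl
  | cons a s' =>
    cases t with
    | nil =>
      right; left
      rw [show (a :: s') ++ w :: ([] : List V) = (a :: s') ++ [w] by simp,
        List.getLast?_concat]
    | cons v t' =>
      right; right
      refine ⟨(a :: s').getLast (by simp), v, (a :: s').dropLast, t', ?_⟩
      have h1 : (a :: s').dropLast ++ [(a :: s').getLast (by simp)] = a :: s' :=
        List.dropLast_append_getLast (by simp)
      have h2 : a :: s' ++ w :: v :: t' =
          ((a :: s').dropLast ++ [(a :: s').getLast (by simp)]) ++ w :: v :: t' := by
        rw [h1]
      rw [h2]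
      simp
lemma not_interior_head {V : Type*} {l : List V} {x : V} (hnd : l.Nodup)
    (hh : l.head? = some x) : ¬ Interior l x := by
  rintro ⟨u, v, s, t, rfl⟩
  cases s with
  | nil =>
    simp only [List.nil_append, List.cons_append, List.head?_cons,
      Option.some.injEq] at hh
    subst hh
    simp at hnd
  | cons a s' =>
    simp only [List.cons_append, List.head?_cons, Option.some.injEq] at hh
    have hnd' : (a :: (s' ++ [u, x, v] ++ t)).Nodup := by simpa using hnd
    rw [hh] at hnd'
    exact (List.nodup_cons.mp hnd').1 (by simp)

/-- If the only edge incident to X₂ is X₁ → X₂, then d-separation of X₂ from Y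
by U transfers to d-separation of X₁ from Y by U. -/
theorem dsep_transfer_along_pendant_edge {V : Type*} [Fintype V]
    (E : V → V → Prop) (hacyc : ∀ v, ¬ Relation.TransGen E v v)
    (X₁ X₂ Y : V) (U : Set V)
    (hedge : E X₁ X₂)
    (honly_in : ∀ v, E v X₂ → v = X₁)
    (hno_out : ∀ v, ¬ E X₂ v)
    (hYU : Y ∉ U) (hX₁U : X₁ ∉ U) (hX₂U : X₂ ∉ U)
    (hY1 : Y ≠ X₁) (hY2 : Y ≠ X₂)
    (hsep : DSep E U X₂ Y) :
    DSep E U X₁ Y := by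
  intro l hnd hch hhead hlast
  have h12 : X₁ ≠ X₂ := by
    intro h; exact hacyc X₂ (Relation.TransGen.single (h ▸ hedge))
  obtain ⟨t, rfl⟩ : ∃ t, l = X₁ :: t := by
    cases l with
    | nil => simp at hhead
    | cons a t =>
      simp only [List.head?_cons, Option.some.injEq] at hhead
      exact ⟨t, by rw [hhead]⟩
  obtain ⟨b, t, rfl⟩ : ∃ b t', t = b :: t' := by
    cases t with
    | nil => simp only [List.getLast?_singleton, Option.some.injEq] at hlast
             exact absurd hlast.symm hY1
    | cons b t' => exact ⟨b, t', rfl⟩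
  -- X₂ is not on the path
  have hX₂l : X₂ ∉ X₁ :: b :: t := by
    intro hmem
    rcases mem_head_last_or_interior hmem with hh | hh | hh
    · simp only [List.head?_cons, Option.some.injEq] at hh; exact h12 hh
    · rw [hlast] at hh; exact hY2 (Option.some_inj.mp hh)
    · obtain ⟨u, v, hinf⟩ := hh
      have hch3 : List.Chain' (IsAdj E) [u, X₂, v] := hch.infix hinf
      simp only [List.Chain', List.isChain_cons_cons, List.isChain_singleton, and_true] at hch3
      obtain ⟨h1, h2⟩ := hch3
      have hu : u = X₁ := by
        rcases h1 with h | h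
        · exact honly_in u h
        · exact absurd h (hno_out u)
      have hv : v = X₁ := by
        rcases h2 with h | h
        · exact absurd h (hno_out v)
        · exact honly_in v h
      have : ([u, X₂, v] : List V).Nodup := (hinf.sublist).nodup hnd
      simp [hu, hv] at this
  -- the extended path
  have hnd' : (X₂ :: X₁ :: b :: t).Nodup := List.nodup_cons.mpr ⟨hX₂l, hnd⟩
  have hch' : (X₂ :: X₁ :: b :: t).Chain' (IsAdj E) := by
    rw [List.Chain', List.isChain_cons_cons]
    exact ⟨Or.inr hedge, hch⟩
  have hlast' : (X₂ :: X₁ :: b :: t).getLast? = some Y := by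
    rw [List.getLast?_cons_cons]; exact hlast
  have hblk := hsep (X₂ :: X₁ :: b :: t) hnd' hch' rfl hlast'
  have hinf_cases : ∀ u w v : V, [u, w, v] <:+: X₂ :: X₁ :: b :: t →
      (u = X₂ ∧ w = X₁) ∨ [u, w, v] <:+: X₁ :: b :: t := by
    intro u w v h
    rcases List.infix_cons_iff.mp h with h | h
    · left
      rw [List.cons_prefix_cons] at h
      obtain ⟨hu, h⟩ := h
      rw [List.cons_prefix_cons] at h
      exact ⟨hu, h.1⟩
    · right; exact h
  have hcol_iff : ∀ w, ColliderOn E (X₂ :: X₁ :: b :: t) w ↔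
      ColliderOn E (X₁ :: b :: t) w := by
    intro w
    constructor
    · rintro ⟨u, v, hinf, hu, hv⟩
      rcases hinf_cases u w v hinf with ⟨hu2, hw1⟩ | h
      · rw [hu2] at hu; exact absurd hu (hno_out w)
      · exact ⟨u, v, h, hu, hv⟩
    · rintro ⟨u, v, hinf, hu, hv⟩
      exact ⟨u, v, List.infix_cons hinf, hu, hv⟩
  have hint_cases : ∀ w, Interior (X₂ :: X₁ :: b :: t) w →
      w = X₁ ∨ Interior (X₁ :: b :: t) w := by
    rintro w ⟨u, v, hinf⟩
    rcases hinf_cases u w v hinf with ⟨_, hw⟩ | h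
    · left; exact hw
    · right; exact ⟨u, v, h⟩
  rcases hblk with ⟨w, hint, hncol, hwU⟩ | ⟨w, hint, hcol, hwU, hdesc⟩
  · rcases hint_cases w hint with rfl | hint'
    · exact absurd hwU hX₁U
    · exact Or.inl ⟨w, hint', fun hc => hncol ((hcol_iff w).mpr hc), hwU⟩
  · have hcol' : ColliderOn E (X₁ :: b :: t) w := (hcol_iff w).mp hcol
    have hwX₁ : w ≠ X₁ := by
      rintro rfl
      obtain ⟨u, v, hinf, _, _⟩ := hcol'
      exact not_interior_head hnd rfl ⟨u, v, hinf⟩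
    rcases hint_cases w hint with rfl | hint'
    · exact absurd rfl hwX₁
    · exact Or.inr ⟨w, hint', hcol', hwU, hdesc⟩
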